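/- Step-norm bound: let J̃ be an N×(ML) real matrix with Gram matrix G = J̃ᵀ J̃ symmetric positive definite with all eigenvalues in [λ_min, λ_max], F = (1/M)·J̃ J̃ᵀ, λ > 0, K ∈ ℝ^{(ML)×M} the vertical stack of L copies of the M×M identity, and J = J̃ K. Then for every r ∈ ℝᴹ, ‖(1/M)·(F + λI)⁻¹ J r‖₂ ≤ (1/M)·√( λ_max · λM / (λM + λ_min) )·(√L/λ)·‖r‖₂. -/

import Mathlib

open Matrix

/-- The Euclidean (ℓ²) norm of a real vector. -/
noncomputable def euclidNorm {n : Type*} [Fintype n] (v : n → ℝ) : ℝ :=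
  Real.sqrt (v ⬝ᵥ v)


lemma quad_bound {n : Type*} [Fintype n] [DecidableEq n]
    (G : Matrix n n ℝ) (hGpd : G.PosDef) (lamMin lamMax : ℝ)
    (hpos : 0 < lamMin) (hle : lamMin ≤ lamMax)
    (heig : ∀ μ : ℝ, (∃ p : n → ℝ, p ≠ 0 ∧ G.mulVec p = μ • p) → lamMin ≤ μ ∧ μ ≤ lamMax)
    (m' : ℝ) (hm' : 0 < m') (x : n → ℝ) :
    x ⬝ᵥ ((G + m' • 1)⁻¹ * G * (G + m' • 1)⁻¹).mulVec x ≤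
      (lamMax / ((lamMin + m') * m')) * (x ⬝ᵥ x) := by
  have hH : G.IsHermitian := hGpd.1
  set U : Matrix n n ℝ := (hH.eigenvectorUnitary : Matrix n n ℝ) with hUdef
  set μ : n → ℝ := hH.eigenvalues with hμdef
  have hUU : star U * U = 1 := Matrix.UnitaryGroup.star_mul_self _
  have hUU' : U * star U = 1 := (Matrix.mem_unitaryGroup_iff).mp hH.eigenvectorUnitary.2
  have hspec : G = U * diagonal μ * star U := by
    have := hH.spectral_theorem
    simpa using this
  have hbd : ∀ i, lamMin ≤ μ i ∧ μ i ≤ lamMax := by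
    intro i
    refine heig _ ⟨⇑(hH.eigenvectorBasis i), ?_, hH.mulVec_eigenvectorBasis i⟩
    have := hH.eigenvectorBasis.orthonormal.ne_zero i
    intro h0
    exact this (by ext j; exact congrFun h0 j)
  have hμpos : ∀ i, 0 < μ i + m' := fun i => by have := (hbd i).1; linarith
  have hco : ∀ A B : Matrix n n ℝ, (U * A * star U) * (U * B * star U) = U * (A * B) * star U := by
    intro A B
    simp only [Matrix.mul_assoc]
    rw [← Matrix.mul_assoc (star U) U (B * star U), hUU, Matrix.one_mul]
  have hsum : G + m' • 1 = U * diagonal (fun i => μ i + m') * star U := by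
    have hdiag : diagonal (fun i : n => μ i + m') = diagonal μ + m' • (1 : Matrix n n ℝ) := by
      rw [smul_one_eq_diagonal, ← diagonal_add]
    rw [hdiag, Matrix.mul_add, Matrix.add_mul, Matrix.mul_smul, Matrix.smul_mul, Matrix.mul_one,
      hUU', ← hspec]
  have key : (G + m' • 1) * (U * diagonal (fun i => (μ i + m')⁻¹) * star U) = 1 := by
    rw [hsum, hco, diagonal_mul_diagonal]
    have : (fun i => (μ i + m') * (μ i + m')⁻¹) = fun _ : n => (1 : ℝ) := by
      funext i; exact mul_inv_cancel₀ (hμpos i).ne'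
    rw [this, diagonal_one, Matrix.mul_one, hUU']
  have hBeq : (G + m' • 1)⁻¹ = U * diagonal (fun i => (μ i + m')⁻¹) * star U :=
    Matrix.inv_eq_right_inv key
  have hBGB : (G + m' • 1)⁻¹ * G * (G + m' • 1)⁻¹
      = U * diagonal (fun i => (μ i + m')⁻¹ * μ i * (μ i + m')⁻¹) * star U := by
    rw [hBeq]
    nth_rewrite 1 [hspec]
    rw [hco, hco, diagonal_mul_diagonal, diagonal_mul_diagonal]
  have hstar : star U = Uᵀ := by
    ext i j; simp [Matrix.star_apply]
  have hdU : ∀ z : n → ℝ, x ⬝ᵥ (U *ᵥ z) = (star U *ᵥ x) ⬝ᵥ z := by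
    intro z
    rw [dotProduct_mulVec, hstar, Matrix.mulVec_transpose]
  set y := star U *ᵥ x with hy
  have hyy : y ⬝ᵥ y = x ⬝ᵥ x := by
    rw [hy, ← hdU, Matrix.mulVec_mulVec, hUU', Matrix.one_mulVec]
  rw [hBGB]
  have hform : x ⬝ᵥ (U * diagonal (fun i => (μ i + m')⁻¹ * μ i * (μ i + m')⁻¹) * star U).mulVec x
      = ∑ i, y i * (((μ i + m')⁻¹ * μ i * (μ i + m')⁻¹) * y i) := by
    rw [← Matrix.mulVec_mulVec, ← Matrix.mulVec_mulVec, hdU]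
    simp [dotProduct, Matrix.mulVec_diagonal]
    rfl
  rw [hform]
  have hc : ∀ i, (μ i + m')⁻¹ * μ i * (μ i + m')⁻¹ ≤ lamMax / ((lamMin + m') * m') := by
    intro i
    obtain ⟨h1, h2⟩ := hbd i
    have ht : 0 < μ i + m' := hμpos i
    have ht0 : 0 < μ i := lt_of_lt_of_le hpos h1
    have heq : (μ i + m')⁻¹ * μ i * (μ i + m')⁻¹ = μ i / ((μ i + m') * (μ i + m')) := by
      field_simp
    rw [heq, div_le_div_iff₀ (by positivity) (by positivity)]
    nlinarith [mul_nonneg (mul_nonneg ht0.le hm'.le) (sub_nonneg.2 hle),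
      mul_nonneg (mul_nonneg hm'.le hm'.le) (sub_nonneg.2 h2),
      mul_nonneg (mul_nonneg ht0.le ht0.le) (sub_nonneg.2 h2),
      mul_pos ht0 hm']
  calc ∑ i, y i * (((μ i + m')⁻¹ * μ i * (μ i + m')⁻¹) * y i)
      ≤ ∑ i, (lamMax / ((lamMin + m') * m')) * (y i * y i) := by
        refine Finset.sum_le_sum fun i _ => ?_
        have := mul_le_mul_of_nonneg_right (hc i) (mul_self_nonneg (y i))
        nlinarith [this]
    _ = (lamMax / ((lamMin + m') * m')) * (y ⬝ᵥ y) := by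
        simp [dotProduct, Finset.mul_sum]
    _ = (lamMax / ((lamMin + m') * m')) * (x ⬝ᵥ x) := by rw [hyy]

theorem step_norm_bound (N M L : ℕ) (hM : 1 ≤ M) (lam : ℝ) (hlam : 0 < lam)
    (Jt : Matrix (Fin N) (Fin L × Fin M) ℝ)
    (G : Matrix (Fin L × Fin M) (Fin L × Fin M) ℝ) (hG : G = Jtᵀ * Jt)
    (hGpd : G.PosDef) (lamMin lamMax : ℝ) (hpos : 0 < lamMin) (hle : lamMin ≤ lamMax)
    (heig : ∀ μ : ℝ, (∃ p : Fin L × Fin M → ℝ, p ≠ 0 ∧ G.mulVec p = μ • p) →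
      lamMin ≤ μ ∧ μ ≤ lamMax)
    (F : Matrix (Fin N) (Fin N) ℝ) (hF : F = (1 / (M : ℝ)) • (Jt * Jtᵀ))
    (K : Matrix (Fin L × Fin M) (Fin M) ℝ)
    (hK : K = fun p j => if p.2 = j then (1 : ℝ) else 0)
    (J : Matrix (Fin N) (Fin M) ℝ) (hJ : J = Jt * K)
    (r : Fin M → ℝ) :
    euclidNorm ((1 / (M : ℝ)) •
        ((F + lam • (1 : Matrix (Fin N) (Fin N) ℝ))⁻¹ * J).mulVec r) ≤
      (1 / (M : ℝ)) * Real.sqrt (lamMax * (lam * (M : ℝ)) / (lam * (M : ℝ) + lamMin)) *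
        (Real.sqrt (L : ℝ) / lam) * euclidNorm r := by
  have hM0 : (0 : ℝ) < M := by
    have : (1 : ℝ) ≤ M := by exact_mod_cast hM
    linarith
  set m' : ℝ := lam * M with hm'def
  have hm' : 0 < m' := mul_pos hlam hM0
  set B : Matrix (Fin L × Fin M) (Fin L × Fin M) ℝ := (G + m' • 1)⁻¹ with hBdef
  -- invertibility of G + m' • 1
  have hm1 : (m' • (1 : Matrix (Fin L × Fin M) (Fin L × Fin M) ℝ)).PosSemidef := by
    rw [smul_one_eq_diagonal]
    exact Matrix.PosSemidef.diagonal (fun i => hm'.le)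
  have hGm : (G + m' • 1).PosDef := hGpd.add_posSemidef hm1
  have hGmkey : (G + m' • 1) * B = 1 :=
    Matrix.mul_nonsing_inv _ ((Matrix.isUnit_iff_isUnit_det _).mp hGm.isUnit)
  -- transposes
  have hTt : Jtᵀ = Jtᴴ := by ext i j; simp [Matrix.conjTranspose_apply]
  have hGsym : Gᵀ = G := by rw [hG, Matrix.transpose_mul, Matrix.transpose_transpose]
  have hBsym : Bᵀ = B := by
    rw [hBdef, Matrix.transpose_nonsing_inv, Matrix.transpose_add, hGsym,
      Matrix.transpose_smul, Matrix.transpose_one]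
  -- F is positive semidefinite, so F + lam • 1 is positive definite
  have hFpsd : F.PosSemidef := by
    constructor
    · rw [hF, hTt]
      show ((1 / (M:ℝ)) • (Jt * Jtᴴ))ᴴ = _
      rw [Matrix.conjTranspose_smul, Matrix.isHermitian_mul_conjTranspose_self Jt]
      simp
    · intro x
      have h0 := (Matrix.posSemidef_self_mul_conjTranspose Jt).2 x
      have hnn : (0:ℝ) ≤ 1 / (M:ℝ) := by positivity
      rw [hF, hTt]
      exact ((Matrix.posSemidef_self_mul_conjTranspose Jt).smul hnn).2 x
  have hlam1pd : (lam • (1 : Matrix (Fin N) (Fin N) ℝ)).PosDef := by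
    rw [smul_one_eq_diagonal]
    exact Matrix.PosDef.diagonal (fun i => hlam)
  have hA1pd : (F + lam • (1 : Matrix (Fin N) (Fin N) ℝ)).PosDef :=
    Matrix.PosDef.posSemidef_add hFpsd hlam1pd
  -- the key matrix identity
  have hFJt : (F + lam • 1) * Jt = (1 / (M:ℝ)) • (Jt * (G + m' • 1)) := by
    rw [Matrix.add_mul, hF, Matrix.smul_mul, Matrix.mul_assoc, ← hG,
      Matrix.mul_add, smul_add, Matrix.smul_mul, Matrix.one_mul, Matrix.mul_smul,
      Matrix.mul_one, smul_smul]
    congr 2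
    field_simp
    exact hm'def.symm
  have hX : (F + lam • 1) * ((M:ℝ) • (Jt * B)) = Jt := by
    rw [Matrix.mul_smul, ← Matrix.mul_assoc, hFJt, Matrix.smul_mul, smul_smul,
      Matrix.mul_assoc, hGmkey, Matrix.mul_one]
    rw [show (M:ℝ) * (1 / (M:ℝ)) = 1 by field_simp, one_smul]
  have hinv : (F + lam • 1)⁻¹ * Jt = (M:ℝ) • (Jt * B) := by
    conv_lhs => rw [← hX]
    rw [← Matrix.mul_assoc,
      Matrix.nonsing_inv_mul _ ((Matrix.isUnit_iff_isUnit_det _).mp hA1pd.isUnit),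
      Matrix.one_mul]
  -- the vector
  have hvec : (1 / (M : ℝ)) • ((F + lam • (1 : Matrix (Fin N) (Fin N) ℝ))⁻¹ * J).mulVec r
      = (Jt * (B * K)).mulVec r := by
    rw [hJ, ← Matrix.mul_assoc, hinv, Matrix.smul_mul, Matrix.smul_mulVec,
      smul_smul, show (1 / (M:ℝ)) * (M:ℝ) = 1 by field_simp, one_smul, Matrix.mul_assoc]
  rw [hvec]
  set u : Fin L × Fin M → ℝ := K.mulVec r with hu
  have hvv : ((Jt * (B * K)).mulVec r) ⬝ᵥ ((Jt * (B * K)).mulVec r)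
      = u ⬝ᵥ ((B * G * B).mulVec u) := by
    rw [← Matrix.mulVec_mulVec, ← Matrix.mulVec_mulVec]
    set w := B.mulVec u with hw
    have h1 : (Jt *ᵥ w) ⬝ᵥ (Jt *ᵥ w) = (G *ᵥ w) ⬝ᵥ w := by
      rw [dotProduct_mulVec, ← Matrix.mulVec_transpose, Matrix.mulVec_mulVec, ← hG]
    rw [h1, hw, dotProduct_mulVec, ← Matrix.mulVec_transpose, hBsym,
      Matrix.mulVec_mulVec, Matrix.mulVec_mulVec, dotProduct_comm]
  have hquad := quad_bound G hGpd lamMin lamMax hpos hle heig m' hm' u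
  -- compute u ⬝ᵥ u
  have hup : ∀ p : Fin L × Fin M, u p = r p.2 := by
    intro p
    simp [hu, Matrix.mulVec, dotProduct, hK]
  have huu : u ⬝ᵥ u = (L : ℝ) * (r ⬝ᵥ r) := by
    simp only [dotProduct, hup]
    rw [Fintype.sum_prod_type]
    simp [Finset.sum_const, mul_comm]
  set c : ℝ := lamMax / ((lamMin + m') * m') with hcdef
  have hvv' : ((Jt * (B * K)).mulVec r) ⬝ᵥ ((Jt * (B * K)).mulVec r)
      ≤ c * ((L : ℝ) * (r ⬝ᵥ r)) := by
    rw [hvv, ← huu]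
    exact hquad
  have hrr : (0:ℝ) ≤ r ⬝ᵥ r := Finset.sum_nonneg fun i _ => mul_self_nonneg _
  have hlamMax : 0 < lamMax := lt_of_lt_of_le hpos hle
  set X : ℝ := lamMax * (lam * (M:ℝ)) / (lam * (M:ℝ) + lamMin) with hXdef
  have hX0 : 0 ≤ X := by positivity
  have hRHS : Real.sqrt (c * ((L : ℝ) * (r ⬝ᵥ r)))
      = (1 / (M : ℝ)) * Real.sqrt X * (Real.sqrt (L : ℝ) / lam) * Real.sqrt (r ⬝ᵥ r) := by
    have hX2 : Real.sqrt X ^ 2 = X := Real.sq_sqrt hX0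
    have hL2 : Real.sqrt (L:ℝ) ^ 2 = (L:ℝ) := Real.sq_sqrt (Nat.cast_nonneg _)
    have expand : ((1/(M:ℝ)) * Real.sqrt X * (Real.sqrt (L:ℝ) / lam))^2
        = (1/(M:ℝ))^2 * X * ((L:ℝ)/lam^2) := by
      have h9 : ((1/(M:ℝ)) * Real.sqrt X * (Real.sqrt (L:ℝ) / lam))^2
          = (1/(M:ℝ))^2 * (Real.sqrt X)^2 * ((Real.sqrt (L:ℝ))^2 / lam^2) := by ring
      rw [h9, hX2, hL2]
    have hsq : c * ((L : ℝ) * (r ⬝ᵥ r))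
        = ((1/(M:ℝ)) * Real.sqrt X * (Real.sqrt (L:ℝ) / lam))^2 * (r ⬝ᵥ r) := by
      rw [expand, hcdef, hXdef, hm'def]
      have h1 : lam * (M:ℝ) + lamMin ≠ 0 := by positivity
      have h2 : lamMin + lam * (M:ℝ) ≠ 0 := by positivity
      field_simp
      ring
    rw [hsq, Real.sqrt_mul (sq_nonneg _), Real.sqrt_sq (by positivity)]
  calc euclidNorm ((Jt * (B * K)).mulVec r)
      ≤ Real.sqrt (c * ((L : ℝ) * (r ⬝ᵥ r))) := Real.sqrt_le_sqrt hvv'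
    _ = (1 / (M : ℝ)) * Real.sqrt X * (Real.sqrt (L : ℝ) / lam) * Real.sqrt (r ⬝ᵥ r) := hRHS
    _ = (1 / (M : ℝ)) * Real.sqrt (lamMax * (lam * (M : ℝ)) / (lam * (M : ℝ) + lamMin)) *
        (Real.sqrt (L : ℝ) / lam) * euclidNorm r := rfl
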